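/- For every k ≥ 2, the graph obtained from the complete graph on 2k+1 vertices by removing a perfect matching on 2k−2 of its vertices (a matching of size k−1) is a SET graph. -/

import Mathlib

open SimpleGraph

variable {V : Type*}

/-- A path decomposition of a simple graph `G`: a list of nontrivial paths of `G`
that are pairwise edge-disjoint and together cover every edge of `G`. -/
structure PathDecomp (G : SimpleGraph V) where
  paths : List (Σ a b : V, G.Walk a b)
  nontrivial : ∀ p ∈ paths, 0 < p.2.2.length
  isPath : ∀ p ∈ paths, p.2.2.IsPath
  edgeDisjoint : paths.Pairwise fun p q => ∀ e, e ∈ p.2.2.edges → e ∉ q.2.2.edges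
  covers : ∀ e ∈ G.edgeSet, ∃ p ∈ paths, e ∈ p.2.2.edges

/-- Cardinality of a path decomposition. -/
def pdCard {G : SimpleGraph V} (D : PathDecomp G) : ℕ := D.paths.length

/-- `ends D u` is the number of paths in `D` having `u` as an end vertex. -/
def ends [DecidableEq V] {G : SimpleGraph V} (D : PathDecomp G) (u : V) : ℕ :=
  (D.paths.filter fun p => p.1 = u ∨ p.2.1 = u).length

/-- The path number: minimum cardinality of a path decomposition. -/
noncomputable def pn (G : SimpleGraph V) : ℕ :=
  sInf {n | ∃ D : PathDecomp G, pdCard D = n}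

/-- Degree as the `ncard` of the neighbor set (no decidability needed). -/
noncomputable def ndeg (G : SimpleGraph V) (v : V) : ℕ := {w | G.Adj v w}.ncard

/-- A SET graph: the set of even-degree vertices consists of exactly three
mutually adjacent vertices, and every odd-degree vertex has at least two
even-degree neighbors. -/
def IsSETGraph (G : SimpleGraph V) : Prop :=
  (∃ a b c : V, a ≠ b ∧ a ≠ c ∧ b ≠ c ∧
      {v : V | Even (ndeg G v)} = {a, b, c} ∧
      G.Adj a b ∧ G.Adj a c ∧ G.Adj b c) ∧
  ∀ v : V, Odd (ndeg G v) →
    ∃ w₁ w₂ : V, w₁ ≠ w₂ ∧ G.Adj v w₁ ∧ G.Adj v w₂ ∧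
      Even (ndeg G w₁) ∧ Even (ndeg G w₂)


theorem complete_minus_matching_isSET (k : ℕ) (hk : 2 ≤ k)
    (M : Set (Sym2 (Fin (2 * k + 1))))
    (hdiag : ∀ e ∈ M, ¬ e.IsDiag)
    (hcard : M.ncard = k - 1)
    (hdisj : M.Pairwise fun e f => ∀ v, v ∈ e → v ∉ f) :
    IsSETGraph ((⊤ : SimpleGraph (Fin (2 * k + 1))).deleteEdges M) := by
  classical
  set G := (⊤ : SimpleGraph (Fin (2 * k + 1))).deleteEdges M with hG
  have hadj : ∀ v w, G.Adj v w ↔ v ≠ w ∧ s(v, w) ∉ M := by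
    intro v w; simp [hG, deleteEdges_adj]
  set S : Set (Fin (2 * k + 1)) := {v | ∃ e ∈ M, v ∈ e} with hS
  -- unmatched vertices have degree 2k
  have degU : ∀ v, v ∉ S → ndeg G v = 2 * k := by
    intro v hv
    have h1 : {w | G.Adj v w} = {v}ᶜ := by
      ext w
      simp only [Set.mem_setOf_eq, hadj, Set.mem_compl_iff, Set.mem_singleton_iff]
      constructor
      · rintro ⟨h1, -⟩ h2; exact h1 h2.symm
      · intro h
        exact ⟨fun h' => h h'.symm, fun hm => hv ⟨_, hm, Sym2.mem_mk_left v w⟩⟩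
    rw [ndeg, h1, Set.ncard_eq_toFinset_card']
    simp [Finset.card_compl]
  -- matched vertices have degree 2k - 1
  have degM : ∀ v, v ∈ S → ndeg G v = 2 * k - 1 := by
    intro v hv
    obtain ⟨e, heM, hve⟩ := hv
    set w₀ := Sym2.Mem.other hve with hw₀
    have hspec : s(v, w₀) = e := Sym2.other_spec hve
    have hm : s(v, w₀) ∈ M := hspec ▸ heM
    have hne : v ≠ w₀ := by
      intro h
      apply hdiag e heM
      rw [← hspec, ← h]
      exact Sym2.mk_isDiag_iff.mpr rfl
    have h1 : {w | G.Adj v w} = ({v, w₀}ᶜ : Set _) := by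
      ext w
      simp only [Set.mem_setOf_eq, hadj, Set.mem_compl_iff, Set.mem_insert_iff,
        Set.mem_singleton_iff, not_or]
      constructor
      · rintro ⟨h1, h2⟩
        exact ⟨fun h => h1 h.symm, fun h => h2 (h ▸ hm)⟩
      · rintro ⟨h1, h2⟩
        refine ⟨fun h => h1 h.symm, fun hm' => ?_⟩
        have hne2 : s(v, w) ≠ s(v, w₀) := by
          rw [ne_eq, Sym2.congr_right]; exact h2
        exact hdisj hm' hm hne2 v (Sym2.mem_mk_left v w) (Sym2.mem_mk_left v w₀)
    rw [ndeg, h1, Set.ncard_eq_toFinset_card']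
    simp [Finset.card_compl, Finset.card_insert_of_notMem, hne]
  -- parity characterisation
  have hEven : ∀ v, Even (ndeg G v) ↔ v ∉ S := by
    intro v
    by_cases hv : v ∈ S
    · rw [degM v hv]
      simp only [hv, not_true_eq_false, iff_false]
      intro h
      rcases h with ⟨m, hm⟩
      omega
    · rw [degU v hv]
      simp [hv, even_two_mul]
  -- cardinality of the matched set
  have hMfin : M.Finite := Set.toFinite M
  have hMcard : hMfin.toFinset.card = k - 1 := by
    rw [← Set.ncard_eq_toFinset_card _ hMfin, hcard]
  set Sf : Finset (Fin (2 * k + 1)) :=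
    hMfin.toFinset.biUnion (fun e => Finset.univ.filter (· ∈ e)) with hSf
  have hmemS : ∀ v, v ∈ S ↔ v ∈ Sf := by
    intro v
    simp only [hSf, hS, Finset.mem_biUnion, Finset.mem_filter, Finset.mem_univ, true_and, Set.Finite.mem_toFinset, Set.mem_setOf_eq]
  have hScard : Sf.card = 2 * (k - 1) := by
    rw [hSf, Finset.card_biUnion]
    · rw [Finset.sum_congr rfl (g := fun _ => 2) (fun e he => ?_)]
      · rw [Finset.sum_const, smul_eq_mul, hMcard, mul_comm]
      · have heM : e ∈ M := hMfin.mem_toFinset.mp he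
        induction e using Sym2.inductionOn with
        | hf x y =>
          have hxy : x ≠ y := fun h => hdiag _ heM (Sym2.mk_isDiag_iff.mpr h)
          have : Finset.univ.filter (· ∈ s(x, y)) = {x, y} := by
            ext u; simp [Sym2.mem_iff]
          rw [this, Finset.card_pair hxy]
    · intro e he f hf hef
      rw [Function.onFun, Finset.disjoint_left]
      intro a ha haf
      simp only [Finset.mem_filter] at ha haf
      exact hdisj (hMfin.mem_toFinset.mp he) (hMfin.mem_toFinset.mp hf) hef a ha.2 haf.2
  have hUcard : Sfᶜ.card = 3 := by
    rw [Finset.card_compl, hScard]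
    simp only [Fintype.card_fin]
    omega
  obtain ⟨a, b, c, hab, hac, hbc, habc⟩ := Finset.card_eq_three.mp hUcard
  have hmemU : ∀ v, v ∉ S ↔ (v = a ∨ v = b ∨ v = c) := by
    intro v
    rw [hmemS, ← Finset.mem_compl, habc]
    simp
  -- unmatched vertices are pairwise adjacent
  have hadjU : ∀ x y, x ∉ S → x ≠ y → G.Adj x y := by
    intro x y hx hxy
    rw [hadj]
    exact ⟨hxy, fun hm => hx ⟨_, hm, Sym2.mem_mk_left x y⟩⟩
  have haS : a ∉ S := (hmemU a).mpr (Or.inl rfl)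
  have hbS : b ∉ S := (hmemU b).mpr (Or.inr (Or.inl rfl))
  have hcS : c ∉ S := (hmemU c).mpr (Or.inr (Or.inr rfl))
  constructor
  · refine ⟨a, b, c, hab, hac, hbc, ?_, hadjU a b haS hab, hadjU a c haS hac,
      hadjU b c hbS hbc⟩
    ext v
    rw [Set.mem_setOf_eq, hEven, hmemU]
    simp
  · intro v hv
    have hvS : v ∈ S := by
      by_contra h
      exact (Nat.not_even_iff_odd.mpr hv) ((hEven v).mpr h)
    have hva : v ≠ a := fun h => haS (h ▸ hvS)
    have hvb : v ≠ b := fun h => hbS (h ▸ hvS)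
    refine ⟨a, b, hab, (hadjU a v haS hva.symm).symm, (hadjU b v hbS hvb.symm).symm,
      (hEven a).mpr haS, (hEven b).mpr hbS⟩
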